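/- Let z₁, z₂, z₃ ∈ ℂ be three distinct points. For i ≠ j set u_{ij} := (z_j − z_i)/|z_j − z_i| (a complex number of modulus 1, with u_{ji} = −u_{ij}), and define the quadratic polynomials β_i(X) := ∏_{j ≠ i} (X − u_{ij}) ∈ ℂ[X], i.e. β₁ = (X − u₁₂)(X − u₁₃), β₂ = (X − u₂₁)(X − u₂₃), β₃ = (X − u₃₁)(X − u₃₂). Then β₁, β₂, β₃ are linearly independent over ℂ. (This is the Euclidean conjecture for n = 3.) -/

import Mathlib

open Polynomial

lemma real_ineq (x y s t : ℝ) (h1 : x^2 + s^2 = 1) (h2 : y^2 + t^2 = 1)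
    (heq : 6 + 2*x + 2*y - 2*(x*y + s*t) = 0) : x = -1 ∧ y = -1 := by
  have hst : s*t = 3 + x + y - x*y := by linarith
  have key : (3 + x + y - x*y)^2 = (1 - x^2)*(1 - y^2) := by
    have hs2 : s^2 = 1 - x^2 := by linarith
    have ht2 : t^2 = 1 - y^2 := by linarith
    calc (3 + x + y - x*y)^2 = s^2 * t^2 := by rw [← hst]; ring
      _ = (1 - x^2)*(1 - y^2) := by rw [hs2, ht2]
  have hx1 : x ≤ 1 := by nlinarith [sq_nonneg s]
  have hx2 : -1 ≤ x := by nlinarith [sq_nonneg s]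
  have hy1 : y ≤ 1 := by nlinarith [sq_nonneg t]
  have hy2 : -1 ≤ y := by nlinarith [sq_nonneg t]
  have h0 : (1+x)^2*(1-y) + (1+y)^2*(1-x) + 2*((1+x)*(1+y)) = 0 := by
    linear_combination key / 2
  have t1 : 0 ≤ (1+x)^2*(1-y) := mul_nonneg (sq_nonneg _) (by linarith)
  have t2 : 0 ≤ (1+y)^2*(1-x) := mul_nonneg (sq_nonneg _) (by linarith)
  have t3 : 0 ≤ (1+x)*(1+y) := mul_nonneg (by linarith) (by linarith)
  have ht3 : (1+x)*(1+y) = 0 := by linarith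
  rcases mul_eq_zero.mp ht3 with hx | hy
  · have hxv : x = -1 := by linarith
    have : (1+y)^2*(1-x) = 0 := by nlinarith
    have : (1+y)^2 = 0 := by nlinarith
    have := sq_eq_zero_iff.mp this
    exact ⟨hxv, by linarith⟩
  · have hyv : y = -1 := by linarith
    have : (1+x)^2*(1-y) = 0 := by nlinarith
    have : (1+x)^2 = 0 := by nlinarith
    have := sq_eq_zero_iff.mp this
    exact ⟨by linarith, hyv⟩

open Complex in
lemma keyD (a b d : ℂ) (ha : a * (starRingEnd ℂ) a = 1)
    (hb : b * (starRingEnd ℂ) b = 1) (hd : d * (starRingEnd ℂ) d = 1)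
    (P Q R : ℝ) (hP : 0 < P) (hQ : 0 < Q) (hR : 0 < R)
    (hside : (P : ℂ) * a + (Q : ℂ) * d = (R : ℂ) * b) :
    (a - b) * (d^2 - a*b) + d * (a^2 + b^2 + 6*(a*b)) ≠ 0 := by
  have ha0 : a ≠ 0 := by rintro rfl; simp at ha
  have hb0 : b ≠ 0 := by rintro rfl; simp at hb
  have hd0 : d ≠ 0 := by rintro rfl; simp at hd
  set ca := (starRingEnd ℂ) a with hca
  set cb := (starRingEnd ℂ) b with hcb
  set cd := (starRingEnd ℂ) d with hcd
  set u : ℂ := a * cb with hu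
  set v : ℂ := d * cb with hv
  have hcu : (starRingEnd ℂ) u = ca * b := by
    rw [hu, map_mul, hcb, Complex.conj_conj]
  have hcv : (starRingEnd ℂ) v = cd * b := by
    rw [hv, map_mul, hcb, Complex.conj_conj]
  -- polynomial identity
  have hid : (a - b) * (d^2 - a*b) + d * (a^2 + b^2 + 6*(a*b))
      = a*b*d*(6 + (a*cb + ca*b) + (d*cb + cd*b)
          - ((d*cb)*(ca*b) + (a*cb)*(cd*b))) := by
    linear_combination (-(a^2*d + a*d^2 - a*b*d^2*ca - a^2*b)) * hb
      + (-(b^2*d - b*d^2)) * ha + (-(a*b^2 - a^2*b^2*cb)) * hd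
  set x := u.re with hx
  set s := u.im with hs
  set y := v.re with hy
  set t := v.im with ht
  have hnu : x^2 + s^2 = 1 := by
    have h1 : u * (starRingEnd ℂ) u = 1 := by
      rw [hcu, hu]; linear_combination cb * b * ha + hb - hd * 0
    rw [Complex.mul_conj] at h1
    have := Complex.ofReal_eq_one.mp (by exact_mod_cast h1)
    rw [Complex.normSq_apply] at this
    rw [hx, hs]; nlinarith [this]
  have hnv : y^2 + t^2 = 1 := by
    have h1 : v * (starRingEnd ℂ) v = 1 := by
      rw [hcv, hv]; linear_combination cb * b * hd + hb
    rw [Complex.mul_conj] at h1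
    have := Complex.ofReal_eq_one.mp (by exact_mod_cast h1)
    rw [Complex.normSq_apply] at this
    rw [hy, ht]; nlinarith [this]
  -- the bracket is a real number
  have hbr : (6 + (a*cb + ca*b) + (d*cb + cd*b)
          - ((d*cb)*(ca*b) + (a*cb)*(cd*b)))
      = ((6 + 2*x + 2*y - 2*(x*y + s*t) : ℝ) : ℂ) := by
    have e1 : a*cb + ca*b = u + (starRingEnd ℂ) u := by rw [hcu]
    have e2 : d*cb + cd*b = v + (starRingEnd ℂ) v := by rw [hcv]
    have e3 : (d*cb)*(ca*b) + (a*cb)*(cd*b)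
        = (v * (starRingEnd ℂ) u) + (starRingEnd ℂ) (v * (starRingEnd ℂ) u) := by
      have hm : (starRingEnd ℂ) (v * (starRingEnd ℂ) u) = (starRingEnd ℂ) v * u := by
        rw [map_mul, Complex.conj_conj]
      rw [hm, hcu, hcv, hu, hv]; ring
    rw [e1, e2, e3, Complex.add_conj, Complex.add_conj, Complex.add_conj]
    have : (v * (starRingEnd ℂ) u).re = y*x + t*s := by
      rw [Complex.mul_re, Complex.conj_re, Complex.conj_im]
      rw [← hx, ← hs, ← hy, ← ht]; ring
    rw [this]
    push_cast
    ring
  intro hDz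
  rw [hid, hbr] at hDz
  have hE : (6 + 2*x + 2*y - 2*(x*y + s*t) : ℝ) = 0 := by
    rcases mul_eq_zero.mp hDz with h | h
    · rcases mul_eq_zero.mp h with h' | h'
      · rcases mul_eq_zero.mp h' with h'' | h''
        · exact absurd h'' ha0
        · exact absurd h'' hb0
      · exact absurd h' hd0
    · exact_mod_cast h
  obtain ⟨hx1, hy1⟩ := real_ineq x y s t hnu hnv hE
  -- then u = -1 and v = -1
  have hs0 : s = 0 := by nlinarith [hnu]
  have ht0 : t = 0 := by nlinarith [hnv]
  have hu1 : u = -1 := by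
    apply Complex.ext
    · show u.re = (-1 : ℂ).re; rw [← hx, hx1]; simp
    · show u.im = (-1 : ℂ).im; rw [← hs, hs0]; simp
  have hv1 : v = -1 := by
    apply Complex.ext
    · show v.re = (-1 : ℂ).re; rw [← hy, hy1]; simp
    · show v.im = (-1 : ℂ).im; rw [← ht, ht0]; simp
  have hab : a = -b := by
    have : a * (cb * b) = -1 * b := by rw [← mul_assoc, ← hu, hu1]
    rw [mul_comm cb b, hb] at this
    simpa using this
  have hdb : d = -b := by
    have : d * (cb * b) = -1 * b := by rw [← mul_assoc, ← hv, hv1]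
    rw [mul_comm cb b, hb] at this
    simpa using this
  rw [hab, hdb] at hside
  have : ((P + Q + R : ℝ) : ℂ) * b = 0 := by push_cast; linear_combination -hside
  rcases mul_eq_zero.mp this with h | h
  · have : (P + Q + R : ℝ) = 0 := by exact_mod_cast h
    linarith
  · exact hb0 h

/-- The Euclidean conjecture for `n = 3`: for three distinct points
`z₁, z₂, z₃` in the plane `ℂ`, with unit directions
`u_{ij} = (z_j - z_i)/|z_j - z_i|` (so `u_{ji} = -u_{ij}`), the quadratics
`β_i = ∏_{j ≠ i} (X - u_{ij})` are linearly independent over `ℂ`. -/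
theorem euclidean_conjecture_three_points (z₁ z₂ z₃ : ℂ)
    (h12 : z₁ ≠ z₂) (h13 : z₁ ≠ z₃) (h23 : z₂ ≠ z₃) :
    LinearIndependent ℂ
      ![(X - C ((z₂ - z₁) / (‖z₂ - z₁‖ : ℂ))) *
          (X - C ((z₃ - z₁) / (‖z₃ - z₁‖ : ℂ))),
        (X - C ((z₁ - z₂) / (‖z₁ - z₂‖ : ℂ))) *
          (X - C ((z₃ - z₂) / (‖z₃ - z₂‖ : ℂ))),
        (X - C ((z₁ - z₃) / (‖z₁ - z₃‖ : ℂ))) *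
          (X - C ((z₂ - z₃) / (‖z₂ - z₃‖ : ℂ)))] := by
  have w12 : z₂ - z₁ ≠ 0 := sub_ne_zero.mpr h12.symm
  have w13 : z₃ - z₁ ≠ 0 := sub_ne_zero.mpr h13.symm
  have w23 : z₃ - z₂ ≠ 0 := sub_ne_zero.mpr h23.symm
  have P0 : 0 < ‖z₂ - z₁‖ := norm_pos_iff.mpr w12
  have Q0 : 0 < ‖z₃ - z₂‖ := norm_pos_iff.mpr w23
  have R0 : 0 < ‖z₃ - z₁‖ := norm_pos_iff.mpr w13
  set a : ℂ := (z₂ - z₁) / (‖z₂ - z₁‖ : ℂ) with ha_def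
  set b : ℂ := (z₃ - z₁) / (‖z₃ - z₁‖ : ℂ) with hb_def
  set d : ℂ := (z₃ - z₂) / (‖z₃ - z₂‖ : ℂ) with hd_def
  -- the other three directions are negatives
  have e21 : (z₁ - z₂) / (‖z₁ - z₂‖ : ℂ) = -a := by
    rw [norm_sub_rev, ha_def, show z₁ - z₂ = -(z₂ - z₁) by ring, neg_div]
  have e31 : (z₁ - z₃) / (‖z₁ - z₃‖ : ℂ) = -b := by
    rw [norm_sub_rev, hb_def, show z₁ - z₃ = -(z₃ - z₁) by ring, neg_div]
  have e32 : (z₂ - z₃) / (‖z₂ - z₃‖ : ℂ) = -d := by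
    rw [norm_sub_rev, hd_def, show z₂ - z₃ = -(z₃ - z₂) by ring, neg_div]
  rw [e21, e31, e32]
  -- unit moduli
  have unit : ∀ w : ℂ, w ≠ 0 →
      (w / (‖w‖ : ℂ)) * (starRingEnd ℂ) (w / (‖w‖ : ℂ)) = 1 := by
    intro w hw
    rw [Complex.mul_conj, Complex.normSq_eq_norm_sq]
    have h1 : ‖w / (‖w‖ : ℂ)‖ = 1 := by
      rw [norm_div, Complex.norm_real, norm_norm,
        div_self (ne_of_gt (norm_pos_iff.mpr hw))]
    rw [h1]
    norm_num
  have hma : a * (starRingEnd ℂ) a = 1 := unit _ w12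
  have hmb : b * (starRingEnd ℂ) b = 1 := unit _ w13
  have hmd : d * (starRingEnd ℂ) d = 1 := unit _ w23
  have hside : ((‖z₂ - z₁‖ : ℝ) : ℂ) * a + ((‖z₃ - z₂‖ : ℝ) : ℂ) * d
      = ((‖z₃ - z₁‖ : ℝ) : ℂ) * b := by
    rw [ha_def, hb_def, hd_def]
    rw [mul_div_cancel₀ _ (Complex.ofReal_ne_zero.mpr (ne_of_gt P0)),
      mul_div_cancel₀ _ (Complex.ofReal_ne_zero.mpr (ne_of_gt Q0)),
      mul_div_cancel₀ _ (Complex.ofReal_ne_zero.mpr (ne_of_gt R0))]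
    ring
  have hD : (a - b) * (d^2 - a*b) + d * (a^2 + b^2 + 6*(a*b)) ≠ 0 :=
    keyD a b d hma hmb hmd _ _ _ P0 Q0 R0 hside
  -- linear independence
  rw [Fintype.linearIndependent_iff]
  intro g hg
  rw [Fin.sum_univ_three] at hg
  simp only [Matrix.cons_val_zero, Matrix.cons_val_one, Matrix.head_cons,
    Matrix.cons_val_two, Matrix.tail_cons] at hg
  have expand : ∀ (u v : ℂ), (X - C u) * (X - C v)
      = X^2 - C (u + v) * X + C (u * v) := by
    intro u v
    rw [C_add, C_mul]; ring
  rw [expand a b, expand (-a) d, expand (-b) (-d)] at hg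
  have c2 : g 0 + g 1 + g 2 = 0 := by
    have h := congrArg (fun p : ℂ[X] => p.coeff 2) hg
    simp only [coeff_add, coeff_sub, coeff_smul, coeff_C_mul, coeff_X_pow, coeff_C,
      coeff_zero, smul_eq_mul, coeff_X_one, coeff_X_zero, coeff_X] at h
    norm_num at h
    linear_combination h
  have c1 : g 0 * (a + b) + g 1 * (-a + d) + g 2 * (-b + -d) = 0 := by
    have h := congrArg (fun p : ℂ[X] => p.coeff 1) hg
    simp only [coeff_add, coeff_sub, coeff_smul, coeff_C_mul, coeff_X_pow, coeff_C,
      coeff_zero, smul_eq_mul, coeff_X_one, coeff_X_zero, coeff_X] at h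
    norm_num at h
    linear_combination -h
  have c0 : g 0 * (a * b) + g 1 * (-a * d) + g 2 * (-b * -d) = 0 := by
    have h := congrArg (fun p : ℂ[X] => p.coeff 0) hg
    simp only [coeff_add, coeff_sub, coeff_smul, coeff_C_mul, coeff_X_pow, coeff_C,
      coeff_zero, smul_eq_mul, coeff_X_one, coeff_X_zero, coeff_X] at h
    norm_num at h
    linear_combination h
  have hg0 : g 0 * ((a - b) * (d^2 - a*b) + d * (a^2 + b^2 + 6*(a*b))) = 0 := by
    linear_combination (2*a*b*d + a*d^2 - b*d^2) * c2 + (a*d + b*d) * c1 + (b - a + 2*d) * c0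
  have hg1 : g 1 * ((a - b) * (d^2 - a*b) + d * (a^2 + b^2 + 6*(a*b))) = 0 := by
    linear_combination (2*a*b*d + b^2*d + a*b^2) * c2 + (a*b - b*d) * c1 + (-(a + 2*b + d)) * c0
  have hg2 : g 2 * ((a - b) * (d^2 - a*b) + d * (a^2 + b^2 + 6*(a*b))) = 0 := by
    linear_combination (a^2*d + 2*a*b*d - a^2*b) * c2 + (-(a*d + a*b)) * c1 + (2*a + b - d) * c0
  intro i
  fin_cases i
  · exact (mul_eq_zero.mp hg0).resolve_right hD
  · exact (mul_eq_zero.mp hg1).resolve_right hD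
  · exact (mul_eq_zero.mp hg2).resolve_right hD
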